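/- Under the stated setup, let Λ = {λ ∈ ℝ^n : Z_λ finite}, and suppose λ* ∈ Λ is a maximum likelihood estimate, i.e. L(λ*) ≥ L(λ) for all λ ∈ Λ. Suppose for every λ ∈ Λ there is a global maximizer γ̂(λ) of γ ↦ A(γ, λ) with Z_{γ̂(λ)+λ} finite, defining M(λ) = γ̂(λ) + λ. Then λ* is a fixed point of M, i.e. γ = 0 maximizes γ ↦ A(γ, λ*). -/

import Mathlib

/- Common setup: log-linear models over proof trees (complete data X) and
   queries (incomplete data Y). -/

variable {X Y : Type*}

/-- `ν_#(x) = ∑ i, ν_i(x)`. -/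
def nuSharp {n : ℕ} (ν : Fin n → X → ℕ) (x : X) : ℕ := ∑ i, ν i x

/-- weighted property sum `λ·ν(x)`. -/
noncomputable def wdot {n : ℕ} (l : Fin n → ℝ) (ν : Fin n → X → ℕ) (x : X) : ℝ :=
  ∑ i, l i * (ν i x : ℝ)

/-- normalizing constant `Z_λ`. -/
noncomputable def Zpart (p0 : X → ℝ) {n : ℕ} (ν : Fin n → X → ℕ) (l : Fin n → ℝ) : ℝ :=
  ∑' x : X, Real.exp (wdot l ν x) * p0 x

/-- log-linear distribution `p_λ(x)`. -/
noncomputable def pLL (p0 : X → ℝ) {n : ℕ} (ν : Fin n → X → ℕ) (l : Fin n → ℝ) (x : X) : ℝ :=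
  (Zpart p0 ν l)⁻¹ * Real.exp (wdot l ν x) * p0 x

/-- incomplete-data probability `p_λ(y) = ∑_{x ∈ X(y)} p_λ(x)`. -/
noncomputable def pLLY (Yf : X → Y) (p0 : X → ℝ) {n : ℕ} (ν : Fin n → X → ℕ)
    (l : Fin n → ℝ) (y : Y) : ℝ :=
  ∑' x : {x : X // Yf x = y}, pLL p0 ν l x.1

/-- incomplete-data log-likelihood `L(λ) = ∑_{y ∈ 𝒴} ln p_λ(y)`. -/
noncomputable def LL (Yf : X → Y) (p0 : X → ℝ) {n : ℕ} (ν : Fin n → X → ℕ)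
    (𝒴 : Multiset Y) (l : Fin n → ℝ) : ℝ :=
  (𝒴.map fun y => Real.log (pLLY Yf p0 ν l y)).sum

/-- expectation `p_λ[f]`. -/
noncomputable def pExp (p0 : X → ℝ) {n : ℕ} (ν : Fin n → X → ℕ) (l : Fin n → ℝ)
    (f : X → ℝ) : ℝ :=
  ∑' x : X, pLL p0 ν l x * f x

/-- conditional expectation `k_λ[f]` given observed `y`. -/
noncomputable def kExp (Yf : X → Y) (p0 : X → ℝ) {n : ℕ} (ν : Fin n → X → ℕ)
    (l : Fin n → ℝ) (y : Y) (f : X → ℝ) : ℝ :=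
  ∑' x : {x : X // Yf x = y}, (pLL p0 ν l x.1 / pLLY Yf p0 ν l y) * f x.1

/-- auxiliary function
`A(γ,λ) = ∑_{y∈𝒴} (1 + k_λ[γ·ν] − p_λ[∑ i, ν̄_i e^{γ_i ν_#}])`. -/
noncomputable def Aaux (Yf : X → Y) (p0 : X → ℝ) {n : ℕ} (ν : Fin n → X → ℕ)
    (𝒴 : Multiset Y) (γ l : Fin n → ℝ) : ℝ :=
  (𝒴.map fun y =>
    1 + kExp Yf p0 ν l y (fun x => wdot γ ν x)
      - pExp p0 ν l (fun x =>
          ∑ i, ((ν i x : ℝ) / (nuSharp ν x : ℝ)) * Real.exp (γ i * (nuSharp ν x : ℝ)))).sum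


section Helpers

variable {X Y : Type*}

lemma wdot_add' {n : ℕ} (γ l : Fin n → ℝ) (ν : Fin n → X → ℕ) (x : X) :
    wdot (γ + l) ν x = wdot γ ν x + wdot l ν x := by
  simp [wdot, add_mul, Finset.sum_add_distrib]

lemma exp_wdot_le {n : ℕ} (γ : Fin n → ℝ) (ν : Fin n → X → ℕ) (x : X)
    (h : 1 ≤ nuSharp ν x) :
    Real.exp (wdot γ ν x) ≤
      ∑ i, ((ν i x : ℝ) / (nuSharp ν x : ℝ)) * Real.exp (γ i * (nuSharp ν x : ℝ)) := by
  have hN : (0:ℝ) < (nuSharp ν x : ℝ) := by exact_mod_cast h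
  have h1 : ∑ i, ((ν i x : ℝ) / (nuSharp ν x : ℝ)) = 1 := by
    rw [← Finset.sum_div, div_eq_one_iff_eq hN.ne']
    simp [nuSharp]
  have hj := convexOn_exp.map_sum_le (t := Finset.univ)
    (w := fun i => (ν i x : ℝ) / (nuSharp ν x : ℝ))
    (p := fun i => γ i * (nuSharp ν x : ℝ))
    (fun i _ => by positivity) h1 (fun i _ => trivial)
  have h2 : ∑ i, ((ν i x : ℝ) / (nuSharp ν x : ℝ)) • (γ i * (nuSharp ν x : ℝ))
      = wdot γ ν x := by
    rw [wdot]
    refine Finset.sum_congr rfl fun i _ => ?_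
    rw [smul_eq_mul]
    field_simp
  rw [h2] at hj
  simpa [smul_eq_mul] using hj

lemma Zpart_pos (p0 : X → ℝ) (hp0 : ∀ x, 0 < p0 x) (hne : Nonempty X)
    {n : ℕ} (ν : Fin n → X → ℕ) (l : Fin n → ℝ)
    (hZ : Summable fun x : X => Real.exp (wdot l ν x) * p0 x) :
    0 < Zpart p0 ν l := by
  obtain ⟨x⟩ := hne
  exact Summable.tsum_pos hZ (fun x => (mul_pos (Real.exp_pos _) (hp0 x)).le) x (mul_pos (Real.exp_pos _) (hp0 x))

lemma tsum_pLL (p0 : X → ℝ) (hp0 : ∀ x, 0 < p0 x) (hne : Nonempty X)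
    {n : ℕ} (ν : Fin n → X → ℕ) (l : Fin n → ℝ)
    (hZ : Summable fun x : X => Real.exp (wdot l ν x) * p0 x) :
    ∑' x : X, pLL p0 ν l x = 1 := by
  have hZpos := Zpart_pos p0 hp0 hne ν l hZ
  unfold pLL
  simp_rw [mul_assoc]
  rw [tsum_mul_left]
  exact inv_mul_cancel₀ hZpos.ne'

end Helpers



lemma pLL_nonneg (p0 : X → ℝ) (hp0 : ∀ x, 0 < p0 x) (hne : Nonempty X)
    {n : ℕ} (ν : Fin n → X → ℕ) (l : Fin n → ℝ)
    (hZ : Summable fun x : X => Real.exp (wdot l ν x) * p0 x) (x : X) :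
    0 ≤ pLL p0 ν l x := by
  have hZpos := Zpart_pos p0 hp0 hne ν l hZ
  exact mul_nonneg (mul_nonneg (inv_nonneg.mpr hZpos.le) (Real.exp_pos _).le) (hp0 x).le

lemma key_ineq (Yf : X → Y)
    (p0 : X → ℝ) (hp0 : ∀ x, 0 < p0 x) (hne : Nonempty X)
    {n : ℕ} (ν : Fin n → X → ℕ) (hν : ∀ x, 1 ≤ nuSharp ν x)
    (𝒴 : Multiset Y) (l γ : Fin n → ℝ)
    (hZ : Summable fun x : X => Real.exp (wdot l ν x) * p0 x)
    (hZ' : Summable fun x : X => Real.exp (wdot (γ + l) ν x) * p0 x)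
    (hpos : ∀ y ∈ 𝒴, 0 < pLLY Yf p0 ν l y)
    (hksum : ∀ y ∈ 𝒴, Summable fun x : {x : X // Yf x = y} =>
      (pLL p0 ν l x.1 / pLLY Yf p0 ν l y) * wdot γ ν x.1)
    (hpsum : Summable fun x : X => pLL p0 ν l x *
      ∑ i, ((ν i x : ℝ) / (nuSharp ν x : ℝ)) * Real.exp (γ i * (nuSharp ν x : ℝ))) :
    Aaux Yf p0 ν 𝒴 γ l ≤ LL Yf p0 ν 𝒴 (γ + l) - LL Yf p0 ν 𝒴 l := by
  set Z := Zpart p0 ν l with hZdef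
  set Z' := Zpart p0 ν (γ + l) with hZ'def
  have hZpos : 0 < Z := Zpart_pos p0 hp0 hne ν l hZ
  have hZ'pos : 0 < Z' := Zpart_pos p0 hp0 hne ν (γ + l) hZ'
  have hnn := pLL_nonneg p0 hp0 hne ν l hZ
  -- pointwise identity
  have hpe : ∀ x : X, pLL p0 ν l x * Real.exp (wdot γ ν x)
      = Z⁻¹ * (Real.exp (wdot (γ + l) ν x) * p0 x) := by
    intro x
    rw [pLL, wdot_add', Real.exp_add, ← hZdef]
    ring
  have s1 : Summable fun x : X => pLL p0 ν l x * Real.exp (wdot γ ν x) :=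
    (summable_congr hpe).mpr (hZ'.mul_left _)
  set E := ∑' x : X, pLL p0 ν l x * Real.exp (wdot γ ν x) with hEdef
  have hE : E = Z' / Z := by
    rw [hEdef]
    calc ∑' x : X, pLL p0 ν l x * Real.exp (wdot γ ν x)
        = ∑' x : X, Z⁻¹ * (Real.exp (wdot (γ + l) ν x) * p0 x) := tsum_congr hpe
      _ = Z⁻¹ * Z' := by rw [tsum_mul_left]; rfl
      _ = Z' / Z := by rw [inv_mul_eq_div]
  set G := pExp p0 ν l (fun x =>
      ∑ i, ((ν i x : ℝ) / (nuSharp ν x : ℝ)) * Real.exp (γ i * (nuSharp ν x : ℝ))) with hGdef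
  have hEG : E ≤ G := by
    rw [hEdef, hGdef, pExp]
    exact Summable.tsum_le_tsum
      (fun x => mul_le_mul_of_nonneg_left (exp_wdot_le γ ν x (hν x)) (hnn x)) s1 hpsum
  -- Z part bound
  have hZbound : Real.log Z' - Real.log Z ≤ G - 1 := by
    have h1 : Real.log (Z' / Z) ≤ Z' / Z - 1 :=
      Real.log_le_sub_one_of_pos (div_pos hZ'pos hZpos)
    rw [Real.log_div hZ'pos.ne' hZpos.ne'] at h1
    have := hE ▸ hEG
    linarith
  -- global summable of pLL
  have hPsum : Summable fun x : X => pLL p0 ν l x := by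
    refine (summable_congr (fun x => ?_)).mpr (hZ.mul_left Z⁻¹)
    rw [pLL, mul_assoc, hZdef]
  -- reduce to per-y inequality
  rw [le_sub_iff_add_le, Aaux, LL, LL, ← Multiset.sum_map_add]
  refine Multiset.sum_map_le_sum_map _ _ (fun y hy => ?_)
  set P := pLLY Yf p0 ν l y with hPdef
  have hP : 0 < P := hpos y hy
  set K := kExp Yf p0 ν l y (fun x => wdot γ ν x) with hKdef
  have hsub1 : Summable fun x : {x : X // Yf x = y} => pLL p0 ν l x.1 :=
    hPsum.subtype {x : X | Yf x = y}
  have hsub2 : Summable fun x : {x : X // Yf x = y} =>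
      pLL p0 ν l x.1 * Real.exp (wdot γ ν x.1) :=
    s1.subtype {x : X | Yf x = y}
  have hw : Summable fun x : {x : X // Yf x = y} => pLL p0 ν l x.1 / P :=
    hsub1.div_const P
  have hwf := hksum y hy
  have hwef : Summable fun x : {x : X // Yf x = y} =>
      (pLL p0 ν l x.1 / P) * Real.exp (wdot γ ν x.1) :=
    (summable_congr (fun x => (div_mul_eq_mul_div _ _ _))).mpr (hsub2.div_const P)
  have hw1 : ∑' x : {x : X // Yf x = y}, pLL p0 ν l x.1 / P = 1 := by
    rw [tsum_div_const]
    exact div_self hP.ne'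
  have hKt : ∑' x : {x : X // Yf x = y},
      (pLL p0 ν l x.1 / P) * wdot γ ν x.1 = K := rfl
  set Q := ∑' x : {x : X // Yf x = y},
      (pLL p0 ν l x.1 / P) * Real.exp (wdot γ ν x.1) with hQdef
  -- Jensen: exp K ≤ Q
  have hQ : Real.exp K ≤ Q := by
    have hgsum : Summable fun x : {x : X // Yf x = y} =>
        Real.exp K * (pLL p0 ν l x.1 / P
          + (pLL p0 ν l x.1 / P) * wdot γ ν x.1 - K * (pLL p0 ν l x.1 / P)) :=
      ((hw.add hwf).sub (hw.mul_left K)).mul_left _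
    have hgsumval : ∑' x : {x : X // Yf x = y},
        Real.exp K * (pLL p0 ν l x.1 / P
          + (pLL p0 ν l x.1 / P) * wdot γ ν x.1 - K * (pLL p0 ν l x.1 / P))
        = Real.exp K := by
      rw [tsum_mul_left, Summable.tsum_sub (hw.add hwf) (hw.mul_left K), Summable.tsum_add hw hwf,
        tsum_mul_left, hw1, hKt]
      ring
    rw [hQdef, ← hgsumval]
    refine Summable.tsum_le_tsum (fun x => ?_) hgsum hwef
    set w := pLL p0 ν l x.1 / P with hwdef
    have hwnn : 0 ≤ w := div_nonneg (hnn x.1) hP.le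
    set t := wdot γ ν x.1 with htdef
    have h1 : Real.exp K * (1 + t - K) ≤ Real.exp t := by
      have h2 := Real.add_one_le_exp (t - K)
      have h3 : Real.exp t = Real.exp K * Real.exp (t - K) := by
        rw [← Real.exp_add]; ring_nf
      nlinarith [Real.exp_pos K]
    calc Real.exp K * (w + w * t - K * w) = w * (Real.exp K * (1 + t - K)) := by ring
      _ ≤ w * Real.exp t := mul_le_mul_of_nonneg_left h1 hwnn
  set T := ∑' x : {x : X // Yf x = y},
      pLL p0 ν l x.1 * Real.exp (wdot γ ν x.1) with hTdef
  have hQT : Q = T / P := by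
    rw [hQdef, hTdef, ← tsum_div_const]
    exact tsum_congr fun x => (div_mul_eq_mul_div _ _ _)
  have hTP : 0 < T / P := lt_of_lt_of_le (Real.exp_pos K) (hQT ▸ hQ)
  have hT : 0 < T := by
    have := mul_pos hTP hP
    rwa [div_mul_cancel₀ _ hP.ne'] at this
  have hlog1 : K ≤ Real.log T - Real.log P := by
    have := (Real.le_log_iff_exp_le hTP).mpr (hQT ▸ hQ)
    rwa [Real.log_div hT.ne' hP.ne'] at this
  -- p_{γ+l}(y) = (Z/Z') * T
  have hpe2 : ∀ x : X, pLL p0 ν (γ + l) x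
      = (Z / Z') * (pLL p0 ν l x * Real.exp (wdot γ ν x)) := by
    intro x
    rw [pLL, pLL, wdot_add', Real.exp_add, ← hZdef, ← hZ'def]
    field_simp
  have hP'T : pLLY Yf p0 ν (γ + l) y = (Z / Z') * T := by
    rw [pLLY, hTdef]
    calc ∑' x : {x : X // Yf x = y}, pLL p0 ν (γ + l) x.1
        = ∑' x : {x : X // Yf x = y},
            (Z / Z') * (pLL p0 ν l x.1 * Real.exp (wdot γ ν x.1)) :=
          tsum_congr fun x => hpe2 x.1
      _ = (Z / Z') * ∑' x : {x : X // Yf x = y},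
            pLL p0 ν l x.1 * Real.exp (wdot γ ν x.1) := tsum_mul_left
  have hlog2 : Real.log (pLLY Yf p0 ν (γ + l) y)
      = Real.log Z - Real.log Z' + Real.log T := by
    rw [hP'T, Real.log_mul (div_pos hZpos hZ'pos).ne' hT.ne',
      Real.log_div hZpos.ne' hZ'pos.ne']
  rw [hlog2]
  have : K = kExp Yf p0 ν l y (fun x => wdot γ ν x) := hKdef
  linarith [hZbound, hlog1]


lemma Aaux_zero (Yf : X → Y) (p0 : X → ℝ) (hp0 : ∀ x, 0 < p0 x) (hne : Nonempty X)
    {n : ℕ} (ν : Fin n → X → ℕ) (hν : ∀ x, 1 ≤ nuSharp ν x)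
    (𝒴 : Multiset Y) (l : Fin n → ℝ)
    (hZ : Summable fun x : X => Real.exp (wdot l ν x) * p0 x) :
    Aaux Yf p0 ν 𝒴 (0 : Fin n → ℝ) l = 0 := by
  have h1 : ∀ y : Y, kExp Yf p0 ν l y (fun x => wdot (0 : Fin n → ℝ) ν x) = 0 := by
    intro y
    rw [kExp]
    simp [wdot]
  have h2 : pExp p0 ν l (fun x => ∑ i, ((ν i x : ℝ) / (nuSharp ν x : ℝ))
      * Real.exp ((0 : Fin n → ℝ) i * (nuSharp ν x : ℝ))) = 1 := by
    rw [pExp]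
    have hnorm : ∀ x : X, (∑ i, ((ν i x : ℝ) / (nuSharp ν x : ℝ))
        * Real.exp ((0 : Fin n → ℝ) i * (nuSharp ν x : ℝ))) = 1 := by
      intro x
      have hN : (0:ℝ) < (nuSharp ν x : ℝ) := by exact_mod_cast hν x
      simp only [Pi.zero_apply, zero_mul, Real.exp_zero, mul_one]
      rw [← Finset.sum_div, div_eq_one_iff_eq hN.ne']
      simp [nuSharp]
    calc ∑' x : X, pLL p0 ν l x * (∑ i, ((ν i x : ℝ) / (nuSharp ν x : ℝ))
          * Real.exp ((0 : Fin n → ℝ) i * (nuSharp ν x : ℝ)))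
        = ∑' x : X, pLL p0 ν l x := tsum_congr fun x => by rw [hnorm x, mul_one]
      _ = 1 := tsum_pLL p0 hp0 hne ν l hZ
  rw [Aaux]
  have : ∀ y ∈ 𝒴, (1 + kExp Yf p0 ν l y (fun x => wdot (0 : Fin n → ℝ) ν x)
      - pExp p0 ν l (fun x => ∑ i, ((ν i x : ℝ) / (nuSharp ν x : ℝ))
        * Real.exp ((0 : Fin n → ℝ) i * (nuSharp ν x : ℝ)))) = 0 := by
    intro y _
    rw [h1 y, h2]
    ring
  rw [Multiset.map_congr rfl this]
  simp

/-- Corollary 5: a maximum likelihood estimate `λ*` is a fixed point of the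
iterative maximization map `M`, i.e. `γ = 0` maximizes `γ ↦ A(γ, λ*)`. -/
theorem mle_is_fixed_point
    {X Y : Type*} [Countable X] (Yf : X → Y)
    (p0 : X → ℝ) (hp0 : ∀ x, 0 < p0 x) (hp0sum : ∑' x : X, p0 x = 1)
    {n : ℕ} (ν : Fin n → X → ℕ) (hν : ∀ x, 1 ≤ nuSharp ν x)
    (𝒴 : Multiset Y) (lstar : Fin n → ℝ)
    (hZstar : Summable fun x : X => Real.exp (wdot lstar ν x) * p0 x)
    (hpos : ∀ l : Fin n → ℝ, (Summable fun x : X => Real.exp (wdot l ν x) * p0 x) →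
      ∀ y ∈ 𝒴, 0 < pLLY Yf p0 ν l y)
    (hksum : ∀ l γ : Fin n → ℝ, ∀ y ∈ 𝒴, Summable fun x : {x : X // Yf x = y} =>
      (pLL p0 ν l x.1 / pLLY Yf p0 ν l y) * wdot γ ν x.1)
    (hpsum : ∀ l γ : Fin n → ℝ, Summable fun x : X => pLL p0 ν l x *
      ∑ i, ((ν i x : ℝ) / (nuSharp ν x : ℝ)) * Real.exp (γ i * (nuSharp ν x : ℝ)))
    (hMLE : ∀ l : Fin n → ℝ, (Summable fun x : X => Real.exp (wdot l ν x) * p0 x) →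
      LL Yf p0 ν 𝒴 l ≤ LL Yf p0 ν 𝒴 lstar)
    (hM : ∀ l : Fin n → ℝ, (Summable fun x : X => Real.exp (wdot l ν x) * p0 x) →
      ∃ γh : Fin n → ℝ,
        (∀ γ : Fin n → ℝ, Aaux Yf p0 ν 𝒴 γ l ≤ Aaux Yf p0 ν 𝒴 γh l) ∧
        (Summable fun x : X => Real.exp (wdot (γh + l) ν x) * p0 x)) :
    ∀ γ : Fin n → ℝ, Aaux Yf p0 ν 𝒴 γ lstar ≤ Aaux Yf p0 ν 𝒴 (0 : Fin n → ℝ) lstar := by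
  intro γ
  have hne : Nonempty X := by
    by_contra h
    rw [not_nonempty_iff] at h
    simp [tsum_eq_zero_of_not_summable, (by haveI := h; exact tsum_empty : ∑' x : X, p0 x = 0)] at hp0sum
  obtain ⟨γh, hmax, hZh⟩ := hM lstar hZstar
  have hkey := key_ineq Yf p0 hp0 hne ν hν 𝒴 lstar γh hZstar hZh
    (hpos lstar hZstar) (hksum lstar γh) (hpsum lstar γh)
  have h0 := Aaux_zero Yf p0 hp0 hne ν hν 𝒴 lstar hZstar
  have hL := hMLE (γh + lstar) hZh
  have hm := hmax γ
  linarith
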